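/- arXiv:2504.02449 — 6 statements merged into one kernel-verified Lean document; each statement's English description precedes it below -/
import Mathlib

section
/- Let Y = {y₁,y₂} be a handle of a segment S on 12 vertices coming from a good cubic graph on 14 vertices. The core of S with respect to Y (vertices of S outside both handles and not adjacent to Y) has exactly 6 vertices if y₁ ∼ y₂, and exactly 4 vertices if y₁ ≁ y₂. -/
/-- Let `Y = {y₁,y₂}` be a handle of the segment `S` (on 12 vertices) obtained from a
good cubic graph `H` on 14 vertices by removing an edge `yz` not contained in a triangle.
The core of `S` with respect to `Y` (the vertices of `S` outside both handles that are
not adjacent to `Y`) has exactly 6 vertices if `y₁ ∼ y₂` and exactly 4 vertices if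
`y₁ ≁ y₂`. -/
theorem stmt12 {V : Type} [Fintype V] [DecidableEq V] (H : SimpleGraph V) [DecidableRel H.Adj]
    (hcard : Fintype.card V = 14)
    (hcubic : ∀ w : V, H.degree w = 3)
    (hgood : ∀ a b : V, a ≠ b → ¬ H.Adj a b →
      (H.neighborFinset a ∩ H.neighborFinset b).card ≤ 1)
    (y z : V) (hyz : H.Adj y z) (htri : ∀ w : V, ¬ (H.Adj y w ∧ H.Adj z w))
    (y₁ y₂ z₁ z₂ : V)
    (hy₁ : H.Adj y y₁) (hy₂ : H.Adj y y₂) (hy12 : y₁ ≠ y₂) (hy₁z : y₁ ≠ z) (hy₂z : y₂ ≠ z)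
    (hz₁ : H.Adj z z₁) (hz₂ : H.Adj z z₂) (hz12 : z₁ ≠ z₂) (hz₁y : z₁ ≠ y) (hz₂y : z₂ ≠ y) :
    let core : Finset V := Finset.univ.filter (fun w =>
      w ∉ ({y, z, y₁, y₂, z₁, z₂} : Finset V) ∧ ¬ H.Adj y₁ w ∧ ¬ H.Adj y₂ w)
    (H.Adj y₁ y₂ → core.card = 6) ∧ (¬ H.Adj y₁ y₂ → core.card = 4) := by
  have hyne : y ≠ z := hyz.ne
  have hyy₁ : y ≠ y₁ := hy₁.ne
  have hyy₂ : y ≠ y₂ := hy₂.ne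
  have hzz₁ : z ≠ z₁ := hz₁.ne
  have hzz₂ : z ≠ z₂ := hz₂.ne
  have hny₁z : ¬ H.Adj y₁ z := fun h => htri y₁ ⟨hy₁, h.symm⟩
  have hny₂z : ¬ H.Adj y₂ z := fun h => htri y₂ ⟨hy₂, h.symm⟩
  have hy₁z₁ : y₁ ≠ z₁ := fun h => htri y₁ ⟨hy₁, by rw [h]; exact hz₁⟩
  have hy₁z₂ : y₁ ≠ z₂ := fun h => htri y₁ ⟨hy₁, by rw [h]; exact hz₂⟩
  have hy₂z₁ : y₂ ≠ z₁ := fun h => htri y₂ ⟨hy₂, by rw [h]; exact hz₁⟩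
  have hy₂z₂ : y₂ ≠ z₂ := fun h => htri y₂ ⟨hy₂, by rw [h]; exact hz₂⟩
  -- neighborhood of y
  have hNy : H.neighborFinset y = {z, y₁, y₂} := by
    refine (Finset.eq_of_subset_of_card_le ?_ ?_).symm
    · intro w hw
      simp only [Finset.mem_insert, Finset.mem_singleton] at hw
      rcases hw with rfl | rfl | rfl
      · exact (SimpleGraph.mem_neighborFinset H y w).mpr hyz
      · exact (SimpleGraph.mem_neighborFinset H y w).mpr hy₁
      · exact (SimpleGraph.mem_neighborFinset H y w).mpr hy₂
    · have h3 : ({z, y₁, y₂} : Finset V).card = 3 := by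
        simp [hy₁z.symm, hy₂z.symm, hy12]
      rw [h3, H.card_neighborFinset_eq_degree, hcubic]
  -- any common neighbor of y₁ and y₂ is y
  have hcn : ∀ w, H.Adj y₁ w → H.Adj y₂ w → w = y := by
    intro w h1 h2
    by_contra hwy
    have hnyw : ¬ H.Adj y w := by
      intro h
      have hw : w ∈ H.neighborFinset y := (SimpleGraph.mem_neighborFinset H y w).mpr h
      rw [hNy] at hw
      simp only [Finset.mem_insert, Finset.mem_singleton] at hw
      rcases hw with rfl | rfl | rfl
      · exact hny₁z h1
      · exact H.irrefl h1
      · exact H.irrefl h2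
    have hle := hgood w y hwy (fun h => hnyw h.symm)
    have hsub : ({y₁, y₂} : Finset V) ⊆ H.neighborFinset w ∩ H.neighborFinset y := by
      intro u hu
      simp only [Finset.mem_insert, Finset.mem_singleton] at hu
      rcases hu with rfl | rfl
      · simp [SimpleGraph.mem_neighborFinset, h1.symm, hy₁]
      · simp [SimpleGraph.mem_neighborFinset, h2.symm, hy₂]
    have hc2 : ({y₁, y₂} : Finset V).card = 2 := by simp [hy12]
    have := Finset.card_le_card hsub
    omega
  -- handle vertices of Y are not adjacent to handle vertices of Z
  have hnadj : ∀ u w, H.Adj y u → u ≠ z → ¬ H.Adj u z → w ≠ y → H.Adj z w → ¬ H.Adj u w := by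
    intro u w hyu huz hnuz hwy hzw huw
    have hle := hgood u z huz hnuz
    have hsub : ({y, w} : Finset V) ⊆ H.neighborFinset u ∩ H.neighborFinset z := by
      intro v hv
      simp only [Finset.mem_insert, Finset.mem_singleton] at hv
      rcases hv with rfl | rfl
      · simp [SimpleGraph.mem_neighborFinset, hyu.symm, hyz.symm]
      · simp [SimpleGraph.mem_neighborFinset, huw, hzw]
    have hc2 : ({y, w} : Finset V).card = 2 := by simp [Ne.symm hwy]
    have := Finset.card_le_card hsub
    omega
  have hny₁z₁ : ¬ H.Adj y₁ z₁ := hnadj y₁ z₁ hy₁ hy₁z hny₁z hz₁y hz₁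
  have hny₁z₂ : ¬ H.Adj y₁ z₂ := hnadj y₁ z₂ hy₁ hy₁z hny₁z hz₂y hz₂
  have hny₂z₁ : ¬ H.Adj y₂ z₁ := hnadj y₂ z₁ hy₂ hy₂z hny₂z hz₁y hz₁
  have hny₂z₂ : ¬ H.Adj y₂ z₂ := hnadj y₂ z₂ hy₂ hy₂z hny₂z hz₂y hz₂
  intro core
  set A : Finset V := {y, z, y₁, y₂, z₁, z₂} with hAdef
  set N₁ := H.neighborFinset y₁ with hN₁
  set N₂ := H.neighborFinset y₂ with hN₂
  have hcore : core = Finset.univ \ (A ∪ (N₁ ∪ N₂)) := by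
    have hdef : core = Finset.univ.filter (fun w =>
        w ∉ A ∧ ¬ H.Adj y₁ w ∧ ¬ H.Adj y₂ w) := rfl
    rw [hdef]
    ext w
    simp only [Finset.mem_filter, Finset.mem_univ, true_and, Finset.mem_sdiff,
      Finset.mem_union, hN₁, hN₂, SimpleGraph.mem_neighborFinset]
    tauto
  have hAcard : A.card = 6 := by
    rw [hAdef,
      Finset.card_insert_of_notMem (by simp [hyne, hyy₁, hyy₂, hz₁y.symm, hz₂y.symm]),
      Finset.card_insert_of_notMem (by simp [hy₁z.symm, hy₂z.symm, hzz₁, hzz₂]),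
      Finset.card_insert_of_notMem (by simp [hy12, hy₁z₁, hy₁z₂]),
      Finset.card_insert_of_notMem (by simp [hy₂z₁, hy₂z₂]),
      Finset.card_insert_of_notMem (by simp [hz12]),
      Finset.card_singleton]
  have hN₁c : N₁.card = 3 := by rw [hN₁, H.card_neighborFinset_eq_degree, hcubic]
  have hN₂c : N₂.card = 3 := by rw [hN₂, H.card_neighborFinset_eq_degree, hcubic]
  have hNinter : N₁ ∩ N₂ = {y} := by
    ext w
    simp only [Finset.mem_inter, hN₁, hN₂, SimpleGraph.mem_neighborFinset,
      Finset.mem_singleton]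
    constructor
    · rintro ⟨h1, h2⟩; exact hcn w h1 h2
    · rintro rfl; exact ⟨hy₁.symm, hy₂.symm⟩
  have hNU : (N₁ ∪ N₂).card = 5 := by
    have h := Finset.card_union_add_card_inter N₁ N₂
    rw [hNinter] at h
    simp only [Finset.card_singleton] at h
    omega
  have huniv : (Finset.univ : Finset V).card = 14 := by simpa using hcard
  have hcardeq : core.card = 14 - (A ∪ (N₁ ∪ N₂)).card := by
    rw [hcore, Finset.card_sdiff_of_subset (Finset.subset_univ _), huniv]
  constructor
  · intro hadj
    have hAint : A ∩ (N₁ ∪ N₂) = {y, y₁, y₂} := by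
      ext w
      simp only [Finset.mem_inter, Finset.mem_union, hN₁, hN₂,
        SimpleGraph.mem_neighborFinset, hAdef, Finset.mem_insert, Finset.mem_singleton]
      constructor
      · rintro ⟨hw, hadj'⟩
        rcases hw with rfl | rfl | rfl | rfl | rfl | rfl
        · exact Or.inl rfl
        · rcases hadj' with h | h
          · exact absurd h hny₁z
          · exact absurd h hny₂z
        · exact Or.inr (Or.inl rfl)
        · exact Or.inr (Or.inr rfl)
        · rcases hadj' with h | h
          · exact absurd h hny₁z₁
          · exact absurd h hny₂z₁
        · rcases hadj' with h | h
          · exact absurd h hny₁z₂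
          · exact absurd h hny₂z₂
      · rintro (rfl | rfl | rfl)
        · exact ⟨Or.inl rfl, Or.inl hy₁.symm⟩
        · exact ⟨Or.inr (Or.inr (Or.inl rfl)), Or.inr hadj.symm⟩
        · exact ⟨Or.inr (Or.inr (Or.inr (Or.inl rfl))), Or.inl hadj⟩
    have hintc : (A ∩ (N₁ ∪ N₂)).card = 3 := by
      rw [hAint]; simp [hyy₁, hyy₂, hy12]
    have h := Finset.card_union_add_card_inter A (N₁ ∪ N₂)
    omega
  · intro hna
    have hAint : A ∩ (N₁ ∪ N₂) = {y} := by
      ext w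
      simp only [Finset.mem_inter, Finset.mem_union, hN₁, hN₂,
        SimpleGraph.mem_neighborFinset, hAdef, Finset.mem_insert, Finset.mem_singleton]
      constructor
      · rintro ⟨hw, hadj'⟩
        rcases hw with rfl | rfl | rfl | rfl | rfl | rfl
        · rfl
        · rcases hadj' with h | h
          · exact absurd h hny₁z
          · exact absurd h hny₂z
        · rcases hadj' with h | h
          · exact absurd h (H.irrefl)
          · exact absurd h.symm hna
        · rcases hadj' with h | h
          · exact absurd h hna
          · exact absurd h (H.irrefl)
        · rcases hadj' with h | h
          · exact absurd h hny₁z₁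
          · exact absurd h hny₂z₁
        · rcases hadj' with h | h
          · exact absurd h hny₁z₂
          · exact absurd h hny₂z₂
      · rintro rfl
        exact ⟨Or.inl rfl, Or.inl hy₁.symm⟩
    have hintc : (A ∩ (N₁ ∪ N₂)).card = 1 := by rw [hAint]; simp
    have h := Finset.card_union_add_card_inter A (N₁ ∪ N₂)
    omega
end

section
/- Let G = srg(85,14,3,2), Q = {x,y,z} a maximal 3-clique, S_x = G₁(x)\Q, S_y = G₁(y)\Q, Z = S_x ∩ S_y, and let C_x ⊆ S_x, C_y ⊆ S_y be the cores with respect to Z. Then every edge of G between S_x\S_y and S_y\S_x joins a vertex of C_x to a vertex of C_y, and these edges form a perfect matching between C_x and C_y. -/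
lemma common3 {V : Type} [Fintype V] [DecidableEq V] {G : SimpleGraph V} [DecidableRel G.Adj]
    {a b p q r : V} (h2 : Fintype.card (G.commonNeighbors a b) = 2)
    (hp : p ∈ G.commonNeighbors a b) (hq : q ∈ G.commonNeighbors a b)
    (hr : r ∈ G.commonNeighbors a b)
    (hpq : p ≠ q) (hpr : p ≠ r) (hqr : q ≠ r) : False := by
  have hs : ({p, q, r} : Finset V) ⊆ (G.commonNeighbors a b).toFinset := by
    intro w hw
    simp only [Finset.mem_insert, Finset.mem_singleton] at hw
    rcases hw with rfl | rfl | rfl <;> simpa using ‹_ ∈ G.commonNeighbors a b›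
  have hle := Finset.card_le_card hs
  rw [Set.toFinset_card, h2] at hle
  have h3 : ({p, q, r} : Finset V).card = 3 := by
    rw [Finset.card_insert_of_notMem (by simp [hpq, hpr]),
      Finset.card_insert_of_notMem (by simp [hqr]), Finset.card_singleton]
  omega

/-- Let `G = srg(85,14,3,2)`, `Q = {x,y,z}` a maximal 3-clique, `S_x = G₁(x)\Q`,
`S_y = G₁(y)\Q`, `Z = S_x ∩ S_y`, and let `C_x ⊆ S_x`, `C_y ⊆ S_y` be the cores with
respect to `Z` (vertices outside both handles with no neighbour in `Z`). Then every edge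
of `G` between `S_x\S_y` and `S_y\S_x` joins a vertex of `C_x` to a vertex of `C_y`, and
these edges form a perfect matching between `C_x` and `C_y`. -/
theorem stmt13 {V : Type} [Fintype V] [DecidableEq V] (G : SimpleGraph V) [DecidableRel G.Adj]
    (h : G.IsSRGWith 85 14 3 2) (hc : G.Connected)
    (x y z : V) (hxy : G.Adj x y) (hxz : G.Adj x z) (hyz : G.Adj y z)
    (hmax : ∀ w : V, ¬ (G.Adj x w ∧ G.Adj y w ∧ G.Adj z w)) :
    let Q : Finset V := {x, y, z}
    let Sx := G.neighborFinset x \ Q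
    let Sy := G.neighborFinset y \ Q
    let Sz := G.neighborFinset z \ Q
    let Zh := Sx ∩ Sy
    let Yh := Sx ∩ Sz
    let Xh := Sy ∩ Sz
    let Cx := (Sx \ (Zh ∪ Yh)).filter (fun u => ∀ w ∈ Zh, ¬ G.Adj u w)
    let Cy := (Sy \ (Zh ∪ Xh)).filter (fun u => ∀ w ∈ Zh, ¬ G.Adj u w)
    (∀ u ∈ Sx \ Sy, ∀ v ∈ Sy \ Sx, G.Adj u v → u ∈ Cx ∧ v ∈ Cy) ∧
    (∀ u ∈ Cx, ∃! v : V, v ∈ Cy ∧ G.Adj u v) ∧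
    (∀ v ∈ Cy, ∃! u : V, u ∈ Cx ∧ G.Adj u v) := by
  intro Q Sx Sy Sz Zh Yh Xh Cx Cy
  have hCx : ∀ u, u ∈ Cx ↔ (G.Adj x u ∧ ¬G.Adj y u ∧ ¬G.Adj z u ∧ u ≠ y ∧ u ≠ z ∧
      ∀ w, G.Adj x w → G.Adj y w → ¬G.Adj u w) := by
    intro u
    simp only [Cx, Zh, Yh, Sx, Sy, Sz, Q, Finset.mem_filter, Finset.mem_sdiff,
      Finset.mem_union, Finset.mem_inter, SimpleGraph.mem_neighborFinset,
      Finset.mem_insert, Finset.mem_singleton]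
    constructor
    · rintro ⟨⟨⟨hxu, hu⟩, hnot⟩, hfil⟩
      have hux : u ≠ x := fun e => hu (Or.inl e)
      have huy : u ≠ y := fun e => hu (Or.inr (Or.inl e))
      have huz : u ≠ z := fun e => hu (Or.inr (Or.inr e))
      have hnyu : ¬G.Adj y u := fun hyu => hnot (Or.inl ⟨⟨hxu, hu⟩, hyu, hu⟩)
      have hnzu : ¬G.Adj z u := fun hzu => hnot (Or.inr ⟨⟨hxu, hu⟩, hzu, hu⟩)
      refine ⟨hxu, hnyu, hnzu, huy, huz, fun w hxw hyw huw => ?_⟩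
      by_cases hwz : w = z
      · exact hnzu (hwz ▸ huw).symm
      · have hwq : ¬(w = x ∨ w = y ∨ w = z) := by
          rintro (e | e | e)
          exacts [hxw.ne' e, hyw.ne' e, hwz e]
        exact hfil w ⟨⟨hxw, hwq⟩, hyw, hwq⟩ huw
    · rintro ⟨hxu, hnyu, hnzu, huy, huz, hfil⟩
      have hux : u ≠ x := hxu.ne'
      have hu : ¬(u = x ∨ u = y ∨ u = z) := by rintro (e | e | e); exacts [hux e, huy e, huz e]
      refine ⟨⟨⟨hxu, hu⟩, ?_⟩, fun w hw => hfil w hw.1.1 hw.2.1⟩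
      rintro (⟨_, hyu, _⟩ | ⟨_, hzu, _⟩)
      exacts [hnyu hyu, hnzu hzu]
  have hCy : ∀ v, v ∈ Cy ↔ (G.Adj y v ∧ ¬G.Adj x v ∧ ¬G.Adj z v ∧ v ≠ x ∧ v ≠ z ∧
      ∀ w, G.Adj x w → G.Adj y w → ¬G.Adj v w) := by
    intro v
    simp only [Cy, Zh, Xh, Sx, Sy, Sz, Q, Finset.mem_filter, Finset.mem_sdiff,
      Finset.mem_union, Finset.mem_inter, SimpleGraph.mem_neighborFinset,
      Finset.mem_insert, Finset.mem_singleton]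
    constructor
    · rintro ⟨⟨⟨hyv, hv⟩, hnot⟩, hfil⟩
      have hvx : v ≠ x := fun e => hv (Or.inl e)
      have hvy : v ≠ y := fun e => hv (Or.inr (Or.inl e))
      have hvz : v ≠ z := fun e => hv (Or.inr (Or.inr e))
      have hnxv : ¬G.Adj x v := fun hxv => hnot (Or.inl ⟨⟨hxv, hv⟩, hyv, hv⟩)
      have hnzv : ¬G.Adj z v := fun hzv => hnot (Or.inr ⟨⟨hyv, hv⟩, hzv, hv⟩)
      refine ⟨hyv, hnxv, hnzv, hvx, hvz, fun w hxw hyw hvw => ?_⟩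
      by_cases hwz : w = z
      · exact hnzv (hwz ▸ hvw).symm
      · have hwq : ¬(w = x ∨ w = y ∨ w = z) := by
          rintro (e | e | e)
          exacts [hxw.ne' e, hyw.ne' e, hwz e]
        exact hfil w ⟨⟨hxw, hwq⟩, hyw, hwq⟩ hvw
    · rintro ⟨hyv, hnxv, hnzv, hvx, hvz, hfil⟩
      have hvy : v ≠ y := hyv.ne'
      have hv : ¬(v = x ∨ v = y ∨ v = z) := by rintro (e | e | e); exacts [hvx e, hvy e, hvz e]
      refine ⟨⟨⟨hyv, hv⟩, ?_⟩, fun w hw => hfil w hw.1.1 hw.2.1⟩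
      rintro (⟨⟨hxv, _⟩, _⟩ | ⟨_, hzv, _⟩)
      exacts [hnxv hxv, hnzv hzv]
  have hmu : ∀ a b : V, a ≠ b → ¬G.Adj a b → Fintype.card (G.commonNeighbors a b) = 2 :=
    fun a b hne hna => h.of_not_adj hne hna
  have key : ∀ u v : V, G.Adj x u → ¬G.Adj y u → u ≠ y → u ≠ z →
      G.Adj y v → ¬G.Adj x v → v ≠ x → v ≠ z → G.Adj u v →
      ¬G.Adj z u ∧ ∀ w, G.Adj x w → G.Adj y w → ¬G.Adj u w := by
    intro u v hxu hnyu huy huz hyv hnxv hvx hvz huv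
    have h2 : Fintype.card (G.commonNeighbors u y) = 2 :=
      hmu u y huy (fun hh => hnyu hh.symm)
    have hxm : x ∈ G.commonNeighbors u y := ⟨hxu.symm, hxy.symm⟩
    have hvm : v ∈ G.commonNeighbors u y := ⟨huv, hyv⟩
    constructor
    · intro hzu
      have hzm : z ∈ G.commonNeighbors u y := ⟨hzu.symm, hyz⟩
      exact common3 h2 hxm hvm hzm (Ne.symm hvx) hxz.ne hvz
    · intro w hxw hyw huw
      have hwm : w ∈ G.commonNeighbors u y := ⟨huw, hyw⟩
      exact common3 h2 hxm hvm hwm (Ne.symm hvx) hxw.ne (fun e => hnxv (e ▸ hxw))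
  have key' : ∀ u v : V, G.Adj x u → ¬G.Adj y u → u ≠ y → u ≠ z →
      G.Adj y v → ¬G.Adj x v → v ≠ x → v ≠ z → G.Adj u v →
      ¬G.Adj z v ∧ ∀ w, G.Adj x w → G.Adj y w → ¬G.Adj v w := by
    intro u v hxu hnyu huy huz hyv hnxv hvx hvz huv
    have h2 : Fintype.card (G.commonNeighbors v x) = 2 :=
      hmu v x hvx (fun hh => hnxv hh.symm)
    have hym : y ∈ G.commonNeighbors v x := ⟨hyv.symm, hxy⟩
    have hum : u ∈ G.commonNeighbors v x := ⟨huv.symm, hxu⟩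
    constructor
    · intro hzv
      have hzm : z ∈ G.commonNeighbors v x := ⟨hzv.symm, hxz⟩
      exact common3 h2 hym hum hzm (Ne.symm huy) hyz.ne huz
    · intro w hxw hyw hvw
      have hwm : w ∈ G.commonNeighbors v x := ⟨hvw, hxw⟩
      exact common3 h2 hym hum hwm (Ne.symm huy) hyw.ne (fun e => hnyu (by rw [e]; exact hyw))
  have part1 : ∀ u ∈ Sx \ Sy, ∀ v ∈ Sy \ Sx, G.Adj u v → u ∈ Cx ∧ v ∈ Cy := by
    intro u hu v hv huv
    simp only [Sx, Sy, Q, Finset.mem_sdiff, SimpleGraph.mem_neighborFinset,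
      Finset.mem_insert, Finset.mem_singleton] at hu hv
    obtain ⟨⟨hxu, huq⟩, hu2⟩ := hu
    obtain ⟨⟨hyv, hvq⟩, hv2⟩ := hv
    have hux : u ≠ x := fun e => huq (Or.inl e)
    have huy : u ≠ y := fun e => huq (Or.inr (Or.inl e))
    have huz : u ≠ z := fun e => huq (Or.inr (Or.inr e))
    have hvx : v ≠ x := fun e => hvq (Or.inl e)
    have hvy : v ≠ y := fun e => hvq (Or.inr (Or.inl e))
    have hvz : v ≠ z := fun e => hvq (Or.inr (Or.inr e))
    have hnyu : ¬G.Adj y u := fun hh => hu2 ⟨hh, huq⟩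
    have hnxv : ¬G.Adj x v := fun hh => hv2 ⟨hh, hvq⟩
    obtain ⟨hnzu, hfu⟩ := key u v hxu hnyu huy huz hyv hnxv hvx hvz huv
    obtain ⟨hnzv, hfv⟩ := key' u v hxu hnyu huy huz hyv hnxv hvx hvz huv
    exact ⟨(hCx u).2 ⟨hxu, hnyu, hnzu, huy, huz, hfu⟩,
      (hCy v).2 ⟨hyv, hnxv, hnzv, hvx, hvz, hfv⟩⟩
  refine ⟨part1, ?_, ?_⟩
  · intro u hu
    obtain ⟨hxu, hnyu, hnzu, huy, huz, hfu⟩ := (hCx u).1 hu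
    have h2 : Fintype.card (G.commonNeighbors u y) = 2 :=
      hmu u y huy (fun hh => hnyu hh.symm)
    have hxm : x ∈ G.commonNeighbors u y := ⟨hxu.symm, hxy.symm⟩
    have h1lt : 1 < ((G.commonNeighbors u y).toFinset).card := by
      rw [Set.toFinset_card, h2]; norm_num
    obtain ⟨v, hvmem, hvne⟩ := Finset.exists_mem_ne h1lt x
    rw [Set.mem_toFinset] at hvmem
    obtain ⟨huv, hyv⟩ := hvmem
    have hvz : v ≠ z := fun e => hnzu (e ▸ huv).symm
    have hnxv : ¬G.Adj x v := fun hxv => hfu v hxv hyv huv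
    obtain ⟨hnzv, hfv⟩ := key' u v hxu hnyu huy huz hyv hnxv hvne hvz huv
    refine ⟨v, ⟨(hCy v).2 ⟨hyv, hnxv, hnzv, hvne, hvz, hfv⟩, huv⟩, ?_⟩
    rintro v' ⟨hv'c, huv'⟩
    obtain ⟨hyv', hnxv', _, hv'x, _, _⟩ := (hCy v').1 hv'c
    by_contra hne
    exact common3 h2 hxm ⟨huv, hyv⟩ ⟨huv', hyv'⟩ (Ne.symm hvne) (Ne.symm hv'x)
      (fun e => hne e.symm)
  · intro v hv
    obtain ⟨hyv, hnxv, hnzv, hvx, hvz, hfv⟩ := (hCy v).1 hv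
    have h2 : Fintype.card (G.commonNeighbors v x) = 2 :=
      hmu v x hvx (fun hh => hnxv hh.symm)
    have hym : y ∈ G.commonNeighbors v x := ⟨hyv.symm, hxy⟩
    have h1lt : 1 < ((G.commonNeighbors v x).toFinset).card := by
      rw [Set.toFinset_card, h2]; norm_num
    obtain ⟨u, humem, hune⟩ := Finset.exists_mem_ne h1lt y
    rw [Set.mem_toFinset] at humem
    obtain ⟨hvu, hxu⟩ := humem
    have huz : u ≠ z := fun e => hnzv (e ▸ hvu).symm
    have hnyu : ¬G.Adj y u := fun hyu => hfv u hxu hyu hvu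
    obtain ⟨hnzu, hfu⟩ := key u v hxu hnyu hune huz hyv hnxv hvx hvz hvu.symm
    refine ⟨u, ⟨(hCx u).2 ⟨hxu, hnyu, hnzu, hune, huz, hfu⟩, hvu.symm⟩, ?_⟩
    rintro u' ⟨hu'c, hu'v⟩
    obtain ⟨hxu', hnyu', _, hu'y, _, _⟩ := (hCx u').1 hu'c
    by_contra hne
    exact common3 h2 hym ⟨hvu, hxu⟩ ⟨hu'v.symm, hxu'⟩ (Ne.symm hune) (Ne.symm hu'y)
      (fun e => hne e.symm)
end

section
/- Let G = srg(85,14,3,2) with maximal 3-clique Q = {x,y,z}, T = S_x∪S_y∪S_z, and suppose u, u′ are two vertices outside Q∪T both adjacent to the same vertex t ∈ S_y∩S_z. If u and u′ have the same set of neighbours in T, then u = u′. -/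
private lemma srg_card_adj {V : Type} [Fintype V] [DecidableEq V] {G : SimpleGraph V}
    [DecidableRel G.Adj] {n k l m : ℕ} (h : G.IsSRGWith n k l m) {v w : V}
    (hvw : G.Adj v w) : (G.neighborFinset v ∩ G.neighborFinset w).card = l := by
  have := h.of_adj v w hvw
  rw [← Set.toFinset_card] at this
  convert this using 2
  ext w; simp [SimpleGraph.mem_commonNeighbors]

private lemma srg_card_not_adj {V : Type} [Fintype V] [DecidableEq V] {G : SimpleGraph V}
    [DecidableRel G.Adj] {n k l m : ℕ} (h : G.IsSRGWith n k l m) {v w : V}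
    (hne : v ≠ w) (hvw : ¬ G.Adj v w) : (G.neighborFinset v ∩ G.neighborFinset w).card = m := by
  have := h.of_not_adj hne hvw
  rw [← Set.toFinset_card] at this
  convert this using 2
  ext w; simp [SimpleGraph.mem_commonNeighbors]

private lemma three_le_card {V : Type} [DecidableEq V] {S : Finset V} {a b c : V}
    (ha : a ∈ S) (hb : b ∈ S) (hc : c ∈ S) (hab : a ≠ b) (hac : a ≠ c) (hbc : b ≠ c) :
    3 ≤ S.card := by
  have hsub : ({a, b, c} : Finset V) ⊆ S := by
    intro w hw
    simp only [Finset.mem_insert, Finset.mem_singleton] at hw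
    rcases hw with rfl | rfl | rfl <;> assumption
  have hcard : ({a, b, c} : Finset V).card = 3 := by
    rw [Finset.card_insert_of_notMem (by simp [hab, hac]),
      Finset.card_insert_of_notMem (by simp [hbc]), Finset.card_singleton]
  calc 3 = ({a, b, c} : Finset V).card := hcard.symm
    _ ≤ S.card := Finset.card_le_card hsub

set_option maxHeartbeats 2000000 in
/-- Let `G = srg(85,14,3,2)` with maximal 3-clique `Q = {x, y, z}` and
`T = S_x ∪ S_y ∪ S_z`. If `u, u'` are vertices outside `Q ∪ T`, both adjacent to the same
vertex `t ∈ S_y ∩ S_z`, and they have the same set of neighbours in `T`, then `u = u'`. -/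
theorem stmt15 {V : Type} [Fintype V] [DecidableEq V] (G : SimpleGraph V) [DecidableRel G.Adj]
    (h : G.IsSRGWith 85 14 3 2) (hc : G.Connected)
    (x y z : V) (hxy : G.Adj x y) (hxz : G.Adj x z) (hyz : G.Adj y z)
    (hmax : ∀ w : V, ¬ (G.Adj x w ∧ G.Adj y w ∧ G.Adj z w)) :
    let Q : Finset V := {x, y, z}
    let Sx := G.neighborFinset x \ Q
    let Sy := G.neighborFinset y \ Q
    let Sz := G.neighborFinset z \ Q
    let T := Sx ∪ Sy ∪ Sz
    ∀ u u' : V, u ∉ Q ∪ T → u' ∉ Q ∪ T →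
      ∀ t ∈ Sy ∩ Sz, G.Adj u t → G.Adj u' t →
        G.neighborFinset u ∩ T = G.neighborFinset u' ∩ T → u = u' := by
  intro Q Sx Sy Sz T u u' hu hu' t ht hut hu't hT
  -- membership characterizations
  have hQmem : ∀ w : V, w ∈ Q ↔ (w = x ∨ w = y ∨ w = z) := by
    intro w; simp [Q]
  have hTmem : ∀ w : V, w ∈ T ↔ ((G.Adj x w ∨ G.Adj y w ∨ G.Adj z w) ∧ w ∉ Q) := by
    intro w
    simp only [T, Sx, Sy, Sz, Finset.mem_union, Finset.mem_sdiff,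
      SimpleGraph.mem_neighborFinset]
    tauto
  -- facts about u
  have huQ : u ∉ Q := fun hq => hu (Finset.mem_union_left _ hq)
  have huT : u ∉ T := fun ht' => hu (Finset.mem_union_right _ ht')
  have hux : ¬ G.Adj x u := fun ha => huT ((hTmem u).2 ⟨Or.inl ha, huQ⟩)
  have huy : ¬ G.Adj y u := fun ha => huT ((hTmem u).2 ⟨Or.inr (Or.inl ha), huQ⟩)
  have huz : ¬ G.Adj z u := fun ha => huT ((hTmem u).2 ⟨Or.inr (Or.inr ha), huQ⟩)
  -- facts about u'
  have hu'Q : u' ∉ Q := fun hq => hu' (Finset.mem_union_left _ hq)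
  have hu'T : u' ∉ T := fun ht' => hu' (Finset.mem_union_right _ ht')
  have hu'x : ¬ G.Adj x u' := fun ha => hu'T ((hTmem u').2 ⟨Or.inl ha, hu'Q⟩)
  have hu'y : ¬ G.Adj y u' := fun ha => hu'T ((hTmem u').2 ⟨Or.inr (Or.inl ha), hu'Q⟩)
  have hu'z : ¬ G.Adj z u' := fun ha => hu'T ((hTmem u').2 ⟨Or.inr (Or.inr ha), hu'Q⟩)
  -- facts about t
  rw [Finset.mem_inter] at ht
  have htQ : t ∉ Q := by
    have := ht.1; rw [Finset.mem_sdiff] at this; exact this.2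
  have hty : G.Adj y t := by
    have := ht.1; rw [Finset.mem_sdiff, SimpleGraph.mem_neighborFinset] at this; exact this.1
  have htz : G.Adj z t := by
    have := ht.2; rw [Finset.mem_sdiff, SimpleGraph.mem_neighborFinset] at this; exact this.1
  have htx : ¬ G.Adj x t := fun ha => hmax t ⟨ha, hty, htz⟩
  have htT : t ∈ T := (hTmem t).2 ⟨Or.inr (Or.inl hty), htQ⟩
  -- transfer of neighbours in T
  have key : ∀ w : V, G.Adj u w → w ∈ T → G.Adj u' w := by
    intro w h1 h2
    have hw : w ∈ G.neighborFinset u ∩ T := by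
      rw [Finset.mem_inter, SimpleGraph.mem_neighborFinset]; exact ⟨h1, h2⟩
    rw [hT, Finset.mem_inter, SimpleGraph.mem_neighborFinset] at hw
    exact hw.1
  -- the two common neighbours of u and x
  have huxne : u ≠ x := fun hq => huQ ((hQmem u).2 (Or.inl hq))
  have huyne : u ≠ y := fun hq => huQ ((hQmem u).2 (Or.inr (Or.inl hq)))
  have huzne : u ≠ z := fun hq => huQ ((hQmem u).2 (Or.inr (Or.inr hq)))
  have hA : (G.neighborFinset u ∩ G.neighborFinset x).card = 2 :=
    srg_card_not_adj h huxne (fun ha => hux ha.symm)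
  obtain ⟨a, haA, b, hbA, hab⟩ : ∃ a ∈ G.neighborFinset u ∩ G.neighborFinset x,
      ∃ b ∈ G.neighborFinset u ∩ G.neighborFinset x, a ≠ b :=
    Finset.one_lt_card.mp (by omega)
  rw [Finset.mem_inter, SimpleGraph.mem_neighborFinset, SimpleGraph.mem_neighborFinset] at haA hbA
  obtain ⟨hua, hxa⟩ := haA
  obtain ⟨hub, hxb⟩ := hbA
  -- a, b are in T
  have hmemT : ∀ w : V, G.Adj u w → G.Adj x w → w ∈ T := by
    intro w h1 h2
    refine (hTmem w).2 ⟨Or.inl h2, ?_⟩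
    intro hwQ
    rcases (hQmem w).1 hwQ with rfl | rfl | rfl
    · exact G.irrefl h2
    · exact huy h1.symm
    · exact huz h1.symm
  have haT : a ∈ T := hmemT a hua hxa
  have hbT : b ∈ T := hmemT b hub hxb
  have hu'a : G.Adj u' a := key a hua haT
  have hu'b : G.Adj u' b := key b hub hbT
  have hat : a ≠ t := fun hq => htx (hq ▸ hxa)
  have hbt : b ≠ t := fun hq => htx (hq ▸ hxb)
  by_contra hne
  by_cases hadj : G.Adj u u'
  · -- adjacent case
    have hC : (G.neighborFinset u ∩ G.neighborFinset u').card = 3 := srg_card_adj h hadj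
    have hCm : ∀ w : V, G.Adj u w → w ∈ T → w ∈ G.neighborFinset u ∩ G.neighborFinset u' := by
      intro w h1 h2
      rw [Finset.mem_inter, SimpleGraph.mem_neighborFinset, SimpleGraph.mem_neighborFinset]
      exact ⟨h1, key w h1 h2⟩
    have hCeq : ({a, b, t} : Finset V) = G.neighborFinset u ∩ G.neighborFinset u' := by
      apply Finset.eq_of_subset_of_card_le
      · intro w hw
        simp only [Finset.mem_insert, Finset.mem_singleton] at hw
        rcases hw with rfl | rfl | rfl
        · exact hCm w hua haT
        · exact hCm w hub hbT
        · exact hCm w hut htT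
      · rw [hC, Finset.card_insert_of_notMem (by simp [hab, hat]),
          Finset.card_insert_of_notMem (by simp [hbt]), Finset.card_singleton]
    -- common helper
    have hmemI : ∀ p q w : V, G.Adj p w → G.Adj q w →
        w ∈ G.neighborFinset p ∩ G.neighborFinset q := by
      intro p q w h1 h2
      rw [Finset.mem_inter, SimpleGraph.mem_neighborFinset, SimpleGraph.mem_neighborFinset]
      exact ⟨h1, h2⟩
    -- extract s : the second common neighbour of u and y
    have hBy : (G.neighborFinset u ∩ G.neighborFinset y).card = 2 :=
      srg_card_not_adj h huyne (fun ha => huy ha.symm)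
    have htBy : t ∈ G.neighborFinset u ∩ G.neighborFinset y := hmemI u y t hut hty
    obtain ⟨s, hsmem⟩ : ((G.neighborFinset u ∩ G.neighborFinset y).erase t).Nonempty := by
      rw [← Finset.card_pos, Finset.card_erase_of_mem htBy, hBy]
      norm_num
    have hst' : s ≠ t := Finset.ne_of_mem_erase hsmem
    have hsBy := Finset.mem_of_mem_erase hsmem
    rw [Finset.mem_inter, SimpleGraph.mem_neighborFinset, SimpleGraph.mem_neighborFinset] at hsBy
    obtain ⟨hus, hys⟩ := hsBy
    have hsT : s ∈ T := by
      refine (hTmem s).2 ⟨Or.inr (Or.inl hys), ?_⟩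
      intro hq
      rcases (hQmem s).1 hq with rfl | rfl | rfl
      · exact hux hus.symm
      · exact G.irrefl hys
      · exact huz hus.symm
    have hsC : s ∈ ({a, b, t} : Finset V) := hCeq ▸ hCm s hus hsT
    simp only [Finset.mem_insert, Finset.mem_singleton] at hsC
    have hxs : G.Adj x s := by
      rcases hsC with rfl | rfl | rfl
      · exact hxa
      · exact hxb
      · exact absurd rfl hst'
    have hu's : G.Adj u' s := key s hus hsT
    have hzs : ¬ G.Adj z s := fun ha => hmax s ⟨hxs, hys, ha⟩
    -- extract s' : the second common neighbour of u and z
    have hBz : (G.neighborFinset u ∩ G.neighborFinset z).card = 2 :=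
      srg_card_not_adj h huzne (fun ha => huz ha.symm)
    have htBz : t ∈ G.neighborFinset u ∩ G.neighborFinset z := hmemI u z t hut htz
    obtain ⟨s', hs'mem⟩ : ((G.neighborFinset u ∩ G.neighborFinset z).erase t).Nonempty := by
      rw [← Finset.card_pos, Finset.card_erase_of_mem htBz, hBz]
      norm_num
    have hs't' : s' ≠ t := Finset.ne_of_mem_erase hs'mem
    have hs'Bz := Finset.mem_of_mem_erase hs'mem
    rw [Finset.mem_inter, SimpleGraph.mem_neighborFinset, SimpleGraph.mem_neighborFinset] at hs'Bz
    obtain ⟨hus', hzs'⟩ := hs'Bz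
    have hs'T : s' ∈ T := by
      refine (hTmem s').2 ⟨Or.inr (Or.inr hzs'), ?_⟩
      intro hq
      rcases (hQmem s').1 hq with rfl | rfl | rfl
      · exact hux hus'.symm
      · exact huy hus'.symm
      · exact G.irrefl hzs'
    have hs'C : s' ∈ ({a, b, t} : Finset V) := hCeq ▸ hCm s' hus' hs'T
    simp only [Finset.mem_insert, Finset.mem_singleton] at hs'C
    have hxs' : G.Adj x s' := by
      rcases hs'C with rfl | rfl | rfl
      · exact hxa
      · exact hxb
      · exact absurd rfl hs't'
    have hu's' : G.Adj u' s' := key s' hus' hs'T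
    have hys' : ¬ G.Adj y s' := fun ha => hmax s' ⟨hxs', ha, hzs'⟩
    -- distinctness facts
    have hyu : y ≠ u := huyne.symm
    have hyu' : y ≠ u' := fun hq => hu'Q ((hQmem u').2 (Or.inr (Or.inl hq.symm)))
    have hzu : z ≠ u := huzne.symm
    have hzu' : z ≠ u' := fun hq => hu'Q ((hQmem u').2 (Or.inr (Or.inr hq.symm)))
    -- s is adjacent to t
    have hst : G.Adj s t := by
      by_contra hnst
      have h2 : (G.neighborFinset s ∩ G.neighborFinset t).card = 2 :=
        srg_card_not_adj h hst' hnst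
      have := three_le_card (hmemI s t y hys.symm hty.symm)
        (hmemI s t u hus.symm hut.symm) (hmemI s t u' hu's.symm hu't.symm) hyu hyu' hne
      omega
    -- s' is adjacent to t
    have hs'tadj : G.Adj s' t := by
      by_contra hnst
      have h2 : (G.neighborFinset s' ∩ G.neighborFinset t).card = 2 :=
        srg_card_not_adj h hs't' hnst
      have := three_le_card (hmemI s' t z hzs'.symm htz.symm)
        (hmemI s' t u hus'.symm hut.symm) (hmemI s' t u' hu's'.symm hu't.symm) hzu hzu' hne
      omega
    -- s is not adjacent to s'
    have hss' : ¬ G.Adj s s' := by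
      intro hq
      have hD : (G.neighborFinset s ∩ G.neighborFinset t).card = 3 := srg_card_adj h hst
      have hDeq : ({y, u, u'} : Finset V) = G.neighborFinset s ∩ G.neighborFinset t := by
        apply Finset.eq_of_subset_of_card_le
        · intro w hw
          simp only [Finset.mem_insert, Finset.mem_singleton] at hw
          rcases hw with rfl | rfl | rfl
          · exact hmemI s t w hys.symm hty.symm
          · exact hmemI s t w hus.symm hut.symm
          · exact hmemI s t w hu's.symm hu't.symm
        · rw [hD, Finset.card_insert_of_notMem (by simp [hyu, hyu']),
            Finset.card_insert_of_notMem (by simp [hne]), Finset.card_singleton]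
      have hs'D : s' ∈ ({y, u, u'} : Finset V) :=
        hDeq ▸ hmemI s t s' hq hs'tadj.symm
      simp only [Finset.mem_insert, Finset.mem_singleton] at hs'D
      rcases hs'D with h1 | h1 | h1
      · rw [h1] at hu's'; exact hu'y hu's'.symm
      · rw [h1] at hxs'; exact hux hxs'
      · rw [h1] at hxs'; exact hu'x hxs'
    -- final contradiction via common neighbours of s and s'
    have hss'ne : s ≠ s' := fun hq => hzs (hq ▸ hzs')
    have h2 : (G.neighborFinset s ∩ G.neighborFinset s').card = 2 :=
      srg_card_not_adj h hss'ne hss'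
    have hxt : x ≠ t := fun hq => htQ ((hQmem t).2 (Or.inl hq.symm))
    have hxu : x ≠ u := huxne.symm
    have htu : t ≠ u := (G.ne_of_adj hut).symm
    have := three_le_card (hmemI s s' x hxs.symm hxs'.symm)
      (hmemI s s' t hst hs'tadj) (hmemI s s' u hus.symm hus'.symm) hxt hxu htu
    omega
  · -- non-adjacent case
    have hC : (G.neighborFinset u ∩ G.neighborFinset u').card = 2 :=
      srg_card_not_adj h hne hadj
    have hCm : ∀ w : V, G.Adj u w → G.Adj u' w → w ∈ G.neighborFinset u ∩ G.neighborFinset u' := by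
      intro w h1 h2
      rw [Finset.mem_inter, SimpleGraph.mem_neighborFinset, SimpleGraph.mem_neighborFinset]
      exact ⟨h1, h2⟩
    have := three_le_card (hCm a hua hu'a) (hCm b hub hu'b) (hCm t hut hu't) hab hat hbt
    omega
end

section
/- Let G = srg(85,14,3,2), T as above, and let u, u′ be vertices outside Q∪T adjacent to t ∈ S_y∩S_z, with neighbour sets d, d′ in T. If some vertex t_i ∈ T with t_i ∉ neighbours of u′ already has two neighbours in d′ ∩ T and t_i is adjacent to u, then u and u′ are non-adjacent. -/
/-- Let `G = srg(85,14,3,2)` with maximal 3-clique `Q = {x,y,z}` and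
`T = S_x ∪ S_y ∪ S_z`, and let `u, u'` be vertices outside `Q ∪ T` adjacent to a vertex
`t ∈ S_y ∩ S_z`. If some vertex `tᵢ ∈ T` which is not adjacent to `u'` already has two
neighbours among the neighbours of `u'` in `T` (i.e. `tᵢ` is in the halo of `u'`) and
`tᵢ` is adjacent to `u`, then `u` and `u'` are non-adjacent. -/
theorem stmt16 {V : Type} [Fintype V] [DecidableEq V] (G : SimpleGraph V) [DecidableRel G.Adj]
    (h : G.IsSRGWith 85 14 3 2) (hc : G.Connected)
    (x y z : V) (hxy : G.Adj x y) (hxz : G.Adj x z) (hyz : G.Adj y z)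
    (hmax : ∀ w : V, ¬ (G.Adj x w ∧ G.Adj y w ∧ G.Adj z w)) :
    let Q : Finset V := {x, y, z}
    let Sx := G.neighborFinset x \ Q
    let Sy := G.neighborFinset y \ Q
    let Sz := G.neighborFinset z \ Q
    let T := Sx ∪ Sy ∪ Sz
    ∀ u u' : V, u ∉ Q ∪ T → u' ∉ Q ∪ T →
      ∀ t ∈ Sy ∩ Sz, G.Adj u t → G.Adj u' t →
        ∀ ti ∈ T, ¬ G.Adj u' ti →
          2 ≤ (G.neighborFinset ti ∩ (G.neighborFinset u' ∩ T)).card →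
          G.Adj u ti → ¬ G.Adj u u' := by
  intro Q Sx Sy Sz T u u' hu hu' t ht hut hu't ti hti hnadj hcard huti hadj
  -- ti ≠ u' since ti ∈ T and u' ∉ T
  have hne : ti ≠ u' := by
    rintro rfl
    exact hu' (Finset.mem_union_right _ hti)
  have hμ : Fintype.card (G.commonNeighbors ti u') = 2 :=
    h.of_not_adj hne (fun hh => hnadj hh.symm)
  have huT : u ∉ T := fun hh => hu (Finset.mem_union_right _ hh)
  -- build 3 common neighbors
  have hsub : insert u (G.neighborFinset ti ∩ (G.neighborFinset u' ∩ T)) ⊆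
      G.neighborFinset ti ∩ G.neighborFinset u' := by
    intro w hw
    rcases Finset.mem_insert.mp hw with rfl | hw
    · simp only [Finset.mem_inter, SimpleGraph.mem_neighborFinset]
      exact ⟨huti.symm, hadj.symm⟩
    · simp only [Finset.mem_inter] at hw ⊢
      exact ⟨hw.1, hw.2.1⟩
  have hcard3 : 3 ≤ (G.neighborFinset ti ∩ G.neighborFinset u').card := by
    refine le_trans ?_ (Finset.card_le_card hsub)
    rw [Finset.card_insert_of_notMem (fun hh => huT (Finset.mem_inter.mp (Finset.mem_inter.mp hh).2).2)]
    omega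
  have : (G.neighborFinset ti ∩ G.neighborFinset u').card = 2 := by
    rw [← hμ, ← Set.toFinset_card]
    congr 1
    ext w
    rw [Set.mem_toFinset]
    simp [SimpleGraph.commonNeighbors, SimpleGraph.mem_neighborFinset]
  omega
end

section
/- Let M be an n×n real symmetric matrix and suppose an LDLᵀ-style Gram–Schmidt process on the bilinear form with Gram matrix M produces orthogonal vectors u₁,...,u_{i} with (u_j,u_j) = D_jj, and D_ii = 0 for some i < n, while M_{ni} ≠ Σ_{j=1}^{i−1} L_{nj} L_{ij} D_{jj}. Then M is not positive semidefinite. -/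
open Matrix

/-- LDLᵀ lemma: let `M` be a symmetric real `n×n` matrix and let `u₁,...,uₙ` and `L` be
produced by the Gram–Schmidt process for the bilinear form `(a,b) = a ⬝ᵥ M *ᵥ b`
(so `u_k = e_k − Σ_{j<k} L_{kj} u_j` with `L_{kj} = (e_k,u_j)/(u_j,u_j)` when
`(u_j,u_j) ≠ 0` and `L_{kj} = 0` otherwise). If `D_{ii} = (u_i,u_i) = 0` for some
`i < k`, while `M_{ki} ≠ Σ_{j<i} L_{kj} L_{ij} D_{jj}`, then `M` is not positive
semidefinite. -/
theorem stmt18 {n : ℕ} (M : Matrix (Fin n) (Fin n) ℝ) (hM : M.IsSymm)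
    (u : Fin n → Fin n → ℝ) (L : Matrix (Fin n) (Fin n) ℝ)
    (hrec : ∀ k : Fin n, u k = Pi.single k 1 - ∑ j ∈ Finset.Iio k, L k j • u j)
    (hL : ∀ k j : Fin n, j < k →
      L k j = if u j ⬝ᵥ (M *ᵥ u j) = 0 then 0
        else ((Pi.single k 1 : Fin n → ℝ) ⬝ᵥ (M *ᵥ u j)) / (u j ⬝ᵥ (M *ᵥ u j)))
    (i k : Fin n) (hik : i < k)
    (hD : u i ⬝ᵥ (M *ᵥ u i) = 0)
    (hne : M k i ≠ ∑ j ∈ Finset.Iio i, L k j * L i j * (u j ⬝ᵥ (M *ᵥ u j))) :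
    ¬ M.PosSemidef := by
  intro hpsd
  -- radical: if (v,v)=0 then M v = 0
  have rad : ∀ v : Fin n → ℝ, v ⬝ᵥ (M *ᵥ v) = 0 → M *ᵥ v = 0 := by
    intro v hv
    exact (hpsd.dotProduct_mulVec_zero_iff v).mp (by simpa using hv)
  have hMui : M *ᵥ u i = 0 := rad _ hD
  have key : (Pi.single k 1 : Fin n → ℝ) ⬝ᵥ (M *ᵥ u i) = 0 := by
    rw [hMui, dotProduct_zero]
  rw [hrec i] at key
  simp only [mulVec_sub, dotProduct_sub, Matrix.mulVec_single_one, single_dotProduct,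
    one_mul, Matrix.transpose_apply, Matrix.col_apply] at key
  have hsum : (M *ᵥ ∑ j ∈ Finset.Iio i, L i j • u j) k
      = ∑ j ∈ Finset.Iio i, L i j * (M *ᵥ u j) k := by
    rw [← Matrix.mulVecLin_apply, map_sum]
    simp [Matrix.mulVecLin_apply, Matrix.mulVec_smul]
  rw [hsum] at key
  have hterm : ∀ j ∈ Finset.Iio i,
      (M *ᵥ u j) k = L k j * (u j ⬝ᵥ (M *ᵥ u j)) := by
    intro j hj
    have hjk : j < k := lt_trans (Finset.mem_Iio.mp hj) hik
    rcases eq_or_ne (u j ⬝ᵥ (M *ᵥ u j)) 0 with h0 | h0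
    · rw [rad _ h0]; simp [h0]
    · have := hL k j hjk
      rw [if_neg h0] at this
      rw [this, div_mul_cancel₀ _ h0, single_dotProduct, one_mul]
  apply hne
  rw [sub_eq_zero.mp key]
  refine Finset.sum_congr rfl fun j hj => ?_
  rw [hterm j hj]; ring
end

section
/- Let M be an n×n positive semidefinite Gram matrix of a spanning set t₁,...,t_n of a subspace W of a real inner product space, let u₁,...,u_n be the Gram–Schmidt orthogonal basis of ℝⁿ with respect to the form given by M, with D_ii = (u_i,u_i), and set N = {i : D_ii ≠ 0} and P = Σ_{i∈N} (1/D_ii) u_iᵀ u_i. If r ∈ ℝⁿ is defined by r_i = u · t_i for some vector u, then the vector w = Σ_i p_i t_i with p = rP is the orthogonal projection of u onto W. -/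
open Matrix RealInnerProductSpace

/-- Projection matrix lemma: let `M` be the (positive semidefinite) Gram matrix of a
spanning set `t₁,...,tₙ` of a subspace `W` of a real inner product space, let
`u₁,...,uₙ` be the Gram–Schmidt orthogonal basis of `ℝⁿ` with respect to the bilinear
form given by `M` (with `D_{ii} = (u_i,u_i)`), let `N = {i : D_{ii} ≠ 0}` and
`P = Σ_{i∈N} D_{ii}⁻¹ uᵢᵀ uᵢ`. If `r ∈ ℝⁿ` is defined by `rᵢ = x · tᵢ` for a vector
`x`, then `w = Σᵢ pᵢ tᵢ` with `p = rP` is the orthogonal projection of `x` onto `W`,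
i.e. `w ∈ W` and `x − w` is orthogonal to `W`. -/
theorem stmt19 {E : Type} [NormedAddCommGroup E] [InnerProductSpace ℝ E]
    {n : ℕ} (t : Fin n → E) (M : Matrix (Fin n) (Fin n) ℝ)
    (hMGram : ∀ i j, M i j = ⟪t i, t j⟫)
    (u : Fin n → Fin n → ℝ) (L : Matrix (Fin n) (Fin n) ℝ)
    (hrec : ∀ k : Fin n, u k = Pi.single k 1 - ∑ j ∈ Finset.Iio k, L k j • u j)
    (hL : ∀ k j : Fin n, j < k →
      L k j = if u j ⬝ᵥ (M *ᵥ u j) = 0 then 0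
        else ((Pi.single k 1 : Fin n → ℝ) ⬝ᵥ (M *ᵥ u j)) / (u j ⬝ᵥ (M *ᵥ u j)))
    (x : E) (r : Fin n → ℝ) (hr : ∀ i, r i = ⟪x, t i⟫)
    (P : Matrix (Fin n) (Fin n) ℝ)
    (hP : P = ∑ i ∈ Finset.univ.filter (fun i : Fin n => u i ⬝ᵥ (M *ᵥ u i) ≠ 0),
      (u i ⬝ᵥ (M *ᵥ u i))⁻¹ • Matrix.of (fun a b => u i a * u i b))
    (p : Fin n → ℝ) (hp : p = Matrix.vecMul r P)
    (w : E) (hw : w = ∑ i, p i • t i) :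
    w ∈ Submodule.span ℝ (Set.range t) ∧
      ∀ v ∈ Submodule.span ℝ (Set.range t), ⟪x - w, v⟫ = 0 := by
  classical
  set ψ : (Fin n → ℝ) →ₗ[ℝ] E := Fintype.linearCombination ℝ t with hψdef
  have hψ_apply : ∀ a : Fin n → ℝ, ψ a = ∑ i, a i • t i := fun a => rfl
  have hψ_single : ∀ k : Fin n, ψ (Pi.single k 1) = t k := by
    intro k
    simp [hψdef]
  -- the bilinear form given by M is the inner product of images under ψ
  have hB : ∀ a b : Fin n → ℝ, a ⬝ᵥ (M *ᵥ b) = ⟪ψ a, ψ b⟫ := by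
    intro a b
    simp only [hψ_apply, sum_inner, inner_sum, real_inner_smul_left, real_inner_smul_right,
      dotProduct, mulVec, ← hMGram, Finset.mul_sum]
    rw [Finset.sum_comm]
    refine Finset.sum_congr rfl fun i _ => Finset.sum_congr rfl fun j _ => by ring
  have hr_dot : ∀ a : Fin n → ℝ, r ⬝ᵥ a = ⟪x, ψ a⟫ := by
    intro a
    simp only [hψ_apply, inner_sum, real_inner_smul_right, dotProduct, hr]
    exact Finset.sum_congr rfl fun i _ => by ring
  set v : Fin n → E := fun k => ψ (u k) with hv
  have hD : ∀ k, u k ⬝ᵥ (M *ᵥ u k) = ⟪v k, v k⟫ := fun k => hB _ _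
  have hv_rec : ∀ k : Fin n, v k = t k - ∑ j ∈ Finset.Iio k, L k j • v j := by
    intro k
    show ψ (u k) = _
    rw [hrec k, map_sub, map_sum, hψ_single]
    simp [_root_.map_smul]
    rfl
  -- orthogonality of the v's
  have orthAux : ∀ (m : ℕ) (k : Fin n), (k : ℕ) ≤ m → ∀ j, j < k → ⟪v k, v j⟫ = 0 := by
    intro m
    induction m with
    | zero =>
      intro k hk j hj
      exact absurd (show (j : ℕ) < (k : ℕ) from hj) (by omega)
    | succ m ih =>
      intro k hk j hj
      rw [hv_rec k, inner_sub_left, sum_inner]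
      have hsum : ∑ i ∈ Finset.Iio k, ⟪L k i • v i, v j⟫ = L k j * ⟪v j, v j⟫ := by
        refine Finset.sum_eq_single_of_mem j (Finset.mem_Iio.mpr hj) ?_ |>.trans ?_
        · intro i hi hij
          rw [real_inner_smul_left]
          rcases lt_or_gt_of_ne hij with h | h
          · rw [real_inner_comm, ih j (by omega) i h, mul_zero]
          · rw [ih i (by have := Finset.mem_Iio.mp hi; omega) j h, mul_zero]
        · rw [real_inner_smul_left]
      rw [hsum]
      by_cases hDj : u j ⬝ᵥ (M *ᵥ u j) = 0
      · have hvj : v j = 0 := by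
          have : ⟪v j, v j⟫ = 0 := by rw [← hD]; exact hDj
          exact inner_self_eq_zero.mp this
        simp [hvj]
      · have hLkj : L k j = ⟪t k, v j⟫ / ⟪v j, v j⟫ := by
          rw [hL k j hj, if_neg hDj, hB, hψ_single, hD]
        have hjj : ⟪v j, v j⟫ ≠ 0 := by rw [← hD]; exact hDj
        rw [hLkj, div_mul_cancel₀ _ hjj, sub_self]
  have orth : ∀ k j : Fin n, j ≠ k → ⟪v k, v j⟫ = 0 := by
    intro k j hjk
    rcases lt_or_gt_of_ne hjk with h | h
    · exact orthAux k k le_rfl j h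
    · rw [real_inner_comm]; exact orthAux j j le_rfl k h
  -- rewrite w
  set N : Finset (Fin n) := Finset.univ.filter (fun i : Fin n => u i ⬝ᵥ (M *ᵥ u i) ≠ 0) with hN
  have hpfun : p = ∑ i ∈ N, ((u i ⬝ᵥ (M *ᵥ u i))⁻¹ * (r ⬝ᵥ u i)) • u i := by
    rw [hp, hP]
    funext j
    simp only [vecMul, dotProduct, Finset.sum_apply, Matrix.sum_apply, Matrix.smul_apply,
      Matrix.of_apply, smul_eq_mul, Pi.smul_apply, Finset.mul_sum, Finset.sum_mul]
    rw [Finset.sum_comm]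
    refine Finset.sum_congr rfl fun i _ => Finset.sum_congr rfl fun a _ => by ring
  have hw' : w = ∑ i ∈ N, ((⟪v i, v i⟫)⁻¹ * ⟪x, v i⟫) • v i := by
    have : w = ψ p := by rw [hw, hψ_apply]
    rw [this, hpfun, map_sum]
    refine Finset.sum_congr rfl fun i _ => ?_
    rw [_root_.map_smul, hD, hr_dot]
  have hNmem : ∀ k : Fin n, k ∈ N ↔ ⟪v k, v k⟫ ≠ 0 := by
    intro k
    rw [hN, Finset.mem_filter, hD]
    simp
  have key : ∀ k, ⟪x - w, v k⟫ = 0 := by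
    intro k
    rw [inner_sub_left, hw', sum_inner]
    by_cases hk : ⟪v k, v k⟫ = 0
    · have hvk : v k = 0 := inner_self_eq_zero.mp hk
      simp [hvk]
    · have hsum : ∑ i ∈ N, ⟪((⟪v i, v i⟫)⁻¹ * ⟪x, v i⟫) • v i, v k⟫ = ⟪x, v k⟫ := by
        refine Finset.sum_eq_single_of_mem k ((hNmem k).mpr hk) ?_ |>.trans ?_
        · intro i hi hik
          rw [real_inner_smul_left, orth i k hik.symm, mul_zero]
        · rw [real_inner_smul_left, mul_comm, ← mul_assoc, mul_inv_cancel₀ hk, one_mul]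
      rw [hsum, sub_self]
  have keyt : ∀ k, ⟪x - w, t k⟫ = 0 := by
    intro k
    rw [← eq_sub_iff_add_eq.mp (hv_rec k), inner_add_right, key, inner_sum, zero_add]
    refine Finset.sum_eq_zero fun j _ => ?_
    rw [real_inner_smul_right, key, mul_zero]
  constructor
  · rw [hw]
    exact Submodule.sum_mem _ fun i _ =>
      Submodule.smul_mem _ _ (Submodule.subset_span ⟨i, rfl⟩)
  · intro y hy
    induction hy using Submodule.span_induction with
    | mem z hz => obtain ⟨k, rfl⟩ := hz; exact keyt k
    | zero => simp
    | add a b _ _ ha hb => rw [inner_add_right, ha, hb, add_zero]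
    | smul c a _ ha => rw [real_inner_smul_right, ha, mul_zero]
end
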